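/- Let h be a Legendre reference function and let g₁, g₂ ∈ ℝ^d. Define x⁺, x₁⁺, x₂⁺ by ∇h(x⁺) = ∇h(x) - g, ∇h(x₁⁺) = ∇h(x) - g₁, ∇h(x₂⁺) = ∇h(x) - g₂ with g = (g₁ + g₂)/2. Then D_h(x, x⁺) ≤ (1/2)[D_h(x, x₁⁺) + D_h(x, x₂⁺)]. -/

import Mathlib

open MeasureTheory Set Finset
noncomputable section

abbrev E (d : ℕ) := EuclideanSpace ℝ (Fin d)

/-- Bregman divergence `D_f(x,y) = f x - f y - ⟪∇f(y), x - y⟫`. -/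
def breg {d : ℕ} (f : E d → ℝ) (f' : E d → E d) (x y : E d) : ℝ :=
  f x - f y - inner ℝ (f' y) (x - y)

open Filter Topology in
lemma grad_ineq {d : ℕ} {s : Set (E d)} {f : E d → ℝ}
    (hf : ConvexOn ℝ s f) {p x y : E d} (hx : x ∈ s) (hy : y ∈ s)
    (hp : HasGradientAt f p x) : f x + inner ℝ p (y - x) ≤ f y := by
  set v : E d := y - x with hv
  set g : ℝ → ℝ := fun t => f (x + t • v) with hg
  have hline : HasDerivAt g (inner ℝ p v : ℝ) 0 := by
    have h1 : HasDerivAt (fun t : ℝ => x + t • v) v 0 := by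
      simpa using ((hasDerivAt_id (0:ℝ)).smul_const v).const_add x
    have h2 : HasFDerivAt f ((InnerProductSpace.toDual ℝ (E d)) p) (x + (0:ℝ) • v) := by
      simpa using hp.hasFDerivAt
    have h3 := h2.comp_hasDerivAt 0 h1
    simp at h3
    exact h3
  rw [hasDerivAt_iff_tendsto_slope] at hline
  have hmono : Tendsto (slope g 0) (𝓝[>] 0) (𝓝 (inner ℝ p v : ℝ)) :=
    hline.mono_left (nhdsWithin_mono _ (fun t ht => (ne_of_gt ht)))
  have hev : ∀ᶠ t in 𝓝[>] (0:ℝ), slope g 0 t ≤ f y - f x := by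
    filter_upwards [Ioc_mem_nhdsGT_of_mem (α := ℝ) ⟨le_refl 0, one_pos⟩] with t ht
    have ht0 : 0 < t := ht.1
    have hconv := hf.2 hx hy (by linarith [ht.2] : (0:ℝ) ≤ 1 - t) ht0.le (by ring)
    have hpt : (1 - t) • x + t • y = x + t • v := by
      simp [hv]; module
    rw [hpt] at hconv
    have hle : g t - g 0 ≤ t * (f y - f x) := by
      simp only [hg, zero_smul, add_zero, smul_eq_mul] at hconv ⊢
      nlinarith
    rw [slope_def_field, sub_zero, div_le_iff₀ ht0]
    linarith
  have := le_of_tendsto hmono hev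
  linarith [this]

/-- Let `h` be a Legendre reference function and `g₁, g₂ ∈ ℝ^d`.
Define `x⁺, x₁⁺, x₂⁺` by `∇h(x⁺) = ∇h(x) - g`, `∇h(x₁⁺) = ∇h(x) - g₁`,
`∇h(x₂⁺) = ∇h(x) - g₂` with `g = (g₁+g₂)/2`.  Then
`D_h(x, x⁺) ≤ (1/2)[D_h(x, x₁⁺) + D_h(x, x₂⁺)]`. -/
theorem bregman_young {d : ℕ} (C : Set (E d)) (hC : IsClosed C) (hCconv : Convex ℝ C)
    (h : E d → ℝ) (h' : E d → E d)
    (hh2 : ContDiffOn ℝ 2 h (interior C))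
    (hhsc : StrictConvexOn ℝ (interior C) h)
    (hh' : ∀ x ∈ interior C, HasGradientAt h (h' x) x)
    (hblanket : ∀ y : E d, ∃! z, z ∈ interior C ∧
      IsMinOn (fun u => h u - (inner ℝ u y : ℝ)) C z)
    (g1 g2 : E d) (x xp x1 x2 : E d)
    (hx : x ∈ interior C) (hxp : xp ∈ interior C)
    (hx1 : x1 ∈ interior C) (hx2 : x2 ∈ interior C)
    (hup : h' xp = h' x - (2⁻¹ : ℝ) • (g1 + g2))
    (hu1 : h' x1 = h' x - g1) (hu2 : h' x2 = h' x - g2) :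
    breg h h' x xp ≤ (1 / 2) * (breg h h' x x1 + breg h h' x x2) := by
  have ineq1 : h x1 + inner ℝ (h' x1) (xp - x1) ≤ h xp :=
    grad_ineq hhsc.convexOn hx1 hxp (hh' x1 hx1)
  have ineq2 : h x2 + inner ℝ (h' x2) (xp - x2) ≤ h xp :=
    grad_ineq hhsc.convexOn hx2 hxp (hh' x2 hx2)
  have hsum : h' x1 + h' x2 = (2:ℝ) • h' xp := by
    rw [hu1, hu2, hup]; module
  have key : ∀ z : E d, (inner ℝ (h' x1) z : ℝ) + inner ℝ (h' x2) z = 2 * inner ℝ (h' xp) z := by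
    intro z
    rw [← inner_add_left, hsum, real_inner_smul_left]
  simp only [breg, inner_sub_right] at *
  linarith [key x, key xp]
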